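/- Integrated coercivity of the p-Laplace flux in the singular range: let p ∈ (1, 2]. There exists a constant C > 0 depending only on p such that for every measure space (Ω, μ) and all measurable f, g : Ω → ℝ^d with ‖f‖_{L^p(μ)} < ∞ and ‖g‖_{L^p(μ)} < ∞, one has ‖f − g‖_{L^p(μ)}^2 ≤ C (‖f‖_{L^p(μ)} + ‖g‖_{L^p(μ)})^{2−p} ∫_Ω (A∘f − A∘g) · (f − g) dμ (the integrand being pointwise nonnegative, the integral is a well-defined value in [0, ∞]). -/

import Mathlib

open Real
open scoped ENNReal


open MeasureTheory
open scoped RealInnerProductSpace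

/-- The p-Laplace flux `A(τ) = |τ|^{p-2} τ` (with `A(0) = 0`). -/
noncomputable def pFlux (d : ℕ) (p : ℝ) (τ : EuclideanSpace ℝ (Fin d)) :
    EuclideanSpace ℝ (Fin d) := ‖τ‖ ^ (p - 2) • τ

/-- The `L^q` norm `(∫_Ω |h|^q dμ)^{1/q}` of a vector-valued function, in `[0, ∞]`. -/
noncomputable def vecLpNorm {Ω : Type*} [MeasurableSpace Ω] (μ : Measure Ω) {d : ℕ}
    (h : Ω → EuclideanSpace ℝ (Fin d)) (q : ℝ) : ENNReal :=
  (∫⁻ ω, ENNReal.ofReal (‖h ω‖ ^ q) ∂μ) ^ (1 / q)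

/-- Integrated coercivity in the singular range `p ∈ (1, 2]`: there is
`C > 0` depending only on `p` such that for every measure space and all measurable
`f, g : Ω → ℝ^d` with `‖f‖_{L^p}, ‖g‖_{L^p} < ∞`,
`‖f − g‖_{L^p}^2 ≤ C (‖f‖_{L^p} + ‖g‖_{L^p})^{2−p} ∫_Ω (A∘f − A∘g) · (f − g) dμ`
(the integrand being pointwise nonnegative, the integral is a value in `[0, ∞]`). -/
lemma oneDimKey {p : ℝ} (hp1 : 1 < p) (hp2 : p ≤ 2) {s t : ℝ} (ht : 0 < t) (hts : t ≤ s) :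
    (p - 1) * (s + t) ^ (p - 2) * (s - t) ≤ s ^ (p - 1) - t ^ (p - 1) := by
  set c : ℝ := (p - 1) * (s + t) ^ (p - 2) with hc
  have hs : 0 < s := ht.trans_le hts
  have hst : 0 < s + t := by linarith
  have hmono : MonotoneOn (fun x : ℝ => x ^ (p - 1) - c * x) (Set.Icc t s) := by
    apply monotoneOn_of_deriv_nonneg (convex_Icc t s)
    · exact ContinuousOn.sub
        (fun x hx => (Real.continuousAt_rpow_const x (p - 1) (Or.inr (by linarith))).continuousWithinAt)
        (continuousOn_const.mul continuousOn_id)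
    · intro x hx
      rw [interior_Icc] at hx
      have hx0 : 0 < x := ht.trans hx.1
      exact (((Real.hasDerivAt_rpow_const (p := p - 1) (Or.inl hx0.ne')).sub
        ((hasDerivAt_id x).const_mul c)).differentiableAt).differentiableWithinAt
    · intro x hx
      rw [interior_Icc] at hx
      have hx0 : 0 < x := ht.trans hx.1
      have hD : HasDerivAt (fun x : ℝ => x ^ (p - 1) - c * x)
          ((p - 1) * x ^ (p - 1 - 1) - c * 1) x :=
        (Real.hasDerivAt_rpow_const (Or.inl hx0.ne')).sub ((hasDerivAt_id x).const_mul c)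
      rw [hD.deriv]
      have hle : (s + t) ^ (p - 2) ≤ x ^ (p - 2) :=
        Real.rpow_le_rpow_of_nonpos hx0 (by nlinarith [hx.2.le]) (by linarith)
      have : p - 1 - 1 = p - 2 := by ring
      rw [this, hc]
      nlinarith [Real.rpow_nonneg hst.le (p - 2)]
  have h := hmono (Set.left_mem_Icc.2 hts) (Set.right_mem_Icc.2 hts) hts
  simp only at h
  linarith

lemma realKeyAux {p : ℝ} (hp1 : 1 < p) (hp2 : p ≤ 2) {s t u : ℝ} (ht : 0 < t) (hts : t ≤ s)
    (hu : u ≤ s * t) :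
    (p - 1) * (s + t) ^ (p - 2) * (s ^ 2 + t ^ 2 - 2 * u) ≤
      s ^ (p - 2) * s ^ 2 + t ^ (p - 2) * t ^ 2 - (s ^ (p - 2) + t ^ (p - 2)) * u := by
  have hs : 0 < s := ht.trans_le hts
  have hst : 0 < s + t := by linarith
  have h1 : (s + t) ^ (p - 2) ≤ s ^ (p - 2) :=
    Real.rpow_le_rpow_of_nonpos hs (by linarith) (by linarith)
  have h2 : (s + t) ^ (p - 2) ≤ t ^ (p - 2) :=
    Real.rpow_le_rpow_of_nonpos ht (by linarith) (by linarith)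
  have h3 : (p - 1) * (s + t) ^ (p - 2) * (s - t) ≤ s ^ (p - 1) - t ^ (p - 1) :=
    oneDimKey hp1 hp2 ht hts
  have hA1 : s ^ (p - 1) = s ^ (p - 2) * s := by
    rw [← Real.rpow_add_one hs.ne' (p - 2)]; ring_nf
  have hA2 : t ^ (p - 1) = t ^ (p - 2) * t := by
    rw [← Real.rpow_add_one ht.ne' (p - 2)]; ring_nf
  have hX : (0:ℝ) ≤ (s + t) ^ (p - 2) := Real.rpow_nonneg hst.le _
  have h3' : (p - 1) * (s + t) ^ (p - 2) * (s - t) * (s - t) ≤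
      (s ^ (p - 1) - t ^ (p - 1)) * (s - t) :=
    mul_le_mul_of_nonneg_right h3 (by linarith)
  have hcoef : 2 * (p - 1) * (s + t) ^ (p - 2) ≤ s ^ (p - 2) + t ^ (p - 2) := by nlinarith
  have hslack : 0 ≤ (s ^ (p - 2) + t ^ (p - 2) - 2 * (p - 1) * (s + t) ^ (p - 2)) * (s * t - u) :=
    mul_nonneg (by linarith) (by linarith)
  nlinarith [h3', hslack]

lemma realKey {p : ℝ} (hp1 : 1 < p) (hp2 : p ≤ 2) {s t u : ℝ} (hs : 0 < s) (ht : 0 < t)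
    (hu : u ≤ s * t) :
    (p - 1) * (s + t) ^ (p - 2) * (s ^ 2 + t ^ 2 - 2 * u) ≤
      s ^ (p - 2) * s ^ 2 + t ^ (p - 2) * t ^ 2 - (s ^ (p - 2) + t ^ (p - 2)) * u := by
  rcases le_total t s with h | h
  · exact realKeyAux hp1 hp2 ht h hu
  · have := realKeyAux hp1 hp2 hs h (by linarith [hu])
    have e1 : t + s = s + t := by ring
    rw [e1] at this
    linarith [this]

lemma coercive {d : ℕ} {p : ℝ} (hp1 : 1 < p) (hp2 : p ≤ 2) (a b : EuclideanSpace ℝ (Fin d)) :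
    (p - 1) * (‖a‖ + ‖b‖) ^ (p - 2) * ‖a - b‖ ^ 2 ≤
      ⟪pFlux d p a - pFlux d p b, a - b⟫ := by
  have hinner : ⟪pFlux d p a - pFlux d p b, a - b⟫ =
      ‖a‖ ^ (p - 2) * ‖a‖ ^ 2 + ‖b‖ ^ (p - 2) * ‖b‖ ^ 2 -
        (‖a‖ ^ (p - 2) + ‖b‖ ^ (p - 2)) * ⟪a, b⟫ := by
    simp only [pFlux, inner_sub_left, inner_sub_right, real_inner_smul_left,
      real_inner_self_eq_norm_sq, real_inner_comm b a]
    ring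
  have hnormsub : ‖a - b‖ ^ 2 = ‖a‖ ^ 2 + ‖b‖ ^ 2 - 2 * ⟪a, b⟫ := by
    rw [norm_sub_sq_real]; ring
  rcases eq_or_ne a 0 with rfl | ha
  · simp only [norm_zero, inner_zero_left, inner_zero_right, zero_add, zero_sub, norm_neg] at *
    rw [hinner]
    have : (0:ℝ) ≤ ‖b‖ ^ (p - 2) * ‖b‖ ^ 2 :=
      mul_nonneg (Real.rpow_nonneg (norm_nonneg b) _) (sq_nonneg _)
    nlinarith
  rcases eq_or_ne b 0 with rfl | hb
  · simp only [norm_zero, inner_zero_left, inner_zero_right, add_zero, sub_zero] at *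
    rw [hinner]
    have : (0:ℝ) ≤ ‖a‖ ^ (p - 2) * ‖a‖ ^ 2 :=
      mul_nonneg (Real.rpow_nonneg (norm_nonneg a) _) (sq_nonneg _)
    nlinarith
  · have hs : 0 < ‖a‖ := norm_pos_iff.2 ha
    have ht : 0 < ‖b‖ := norm_pos_iff.2 hb
    have hu : ⟪a, b⟫ ≤ ‖a‖ * ‖b‖ := real_inner_le_norm a b
    rw [hinner, hnormsub]
    have := realKey hp1 hp2 hs ht hu
    linarith

lemma inner_nonneg {d : ℕ} {p : ℝ} (hp1 : 1 < p) (hp2 : p ≤ 2) (a b : EuclideanSpace ℝ (Fin d)) :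
    0 ≤ ⟪pFlux d p a - pFlux d p b, a - b⟫ := by
  refine le_trans ?_ (coercive hp1 hp2 a b)
  exact mul_nonneg (mul_nonneg (by linarith) (Real.rpow_nonneg (by positivity) _)) (sq_nonneg _)

lemma pointwiseKey {d : ℕ} {p : ℝ} (hp1 : 1 < p) (hp2 : p ≤ 2) (a b : EuclideanSpace ℝ (Fin d)) :
    ‖a - b‖ ^ p ≤ ((p - 1)⁻¹ * ⟪pFlux d p a - pFlux d p b, a - b⟫) ^ (p / 2) *
      ((‖a‖ + ‖b‖) ^ p) ^ ((2 - p) / 2) := by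
  have hI0 : 0 ≤ ⟪pFlux d p a - pFlux d p b, a - b⟫ := inner_nonneg hp1 hp2 a b
  have hc0 : (0:ℝ) ≤ (p - 1)⁻¹ := inv_nonneg.2 (by linarith)
  rcases eq_or_ne a b with rfl | hab
  · rw [sub_self, norm_zero, Real.zero_rpow (by intro h; rw[h] at hp1; linarith : p ≠ 0)]
    refine mul_nonneg (Real.rpow_nonneg ?_ _)
      (Real.rpow_nonneg (Real.rpow_nonneg (by positivity) _) _)
    simp
  · set K : ℝ := ‖a‖ + ‖b‖ with hK
    set I : ℝ := ⟪pFlux d p a - pFlux d p b, a - b⟫ with hIdef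
    have hab' : 0 < ‖a - b‖ := norm_sub_pos_iff.2 hab
    have hKpos : 0 < K := by
      have := norm_sub_le a b
      rw [hK]; linarith
    -- step 1 : ‖a-b‖² ≤ (p-1)⁻¹ * I * K^(2-p)
    have hKK : K ^ (p - 2) * K ^ (2 - p) = 1 := by
      rw [← Real.rpow_add hKpos]; norm_num
    have step1 : ‖a - b‖ ^ 2 ≤ (p - 1)⁻¹ * I * K ^ (2 - p) := by
      have h := coercive hp1 hp2 a b
      have hrw : ‖a - b‖ ^ 2 =
          ((p - 1) * K ^ (p - 2) * ‖a - b‖ ^ 2) * ((p - 1)⁻¹ * K ^ (2 - p)) := by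
        have hne : (p - 1) ≠ 0 := ne_of_gt (by linarith)
        rw [show ((p - 1) * K ^ (p - 2) * ‖a - b‖ ^ 2) * ((p - 1)⁻¹ * K ^ (2 - p)) =
          ((p - 1) * (p - 1)⁻¹) * (K ^ (p - 2) * K ^ (2 - p)) * ‖a - b‖ ^ 2 from by ring,
          hKK, mul_inv_cancel₀ hne]
        ring
      rw [hrw]
      have hnn : (0:ℝ) ≤ (p - 1)⁻¹ * K ^ (2 - p) :=
        mul_nonneg hc0 (Real.rpow_nonneg hKpos.le _)
      calc ((p - 1) * K ^ (p - 2) * ‖a - b‖ ^ 2) * ((p - 1)⁻¹ * K ^ (2 - p))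
          ≤ I * ((p - 1)⁻¹ * K ^ (2 - p)) := mul_le_mul_of_nonneg_right h hnn
        _ = (p - 1)⁻¹ * I * K ^ (2 - p) := by ring
    -- step 2 : raise to power p/2
    have hp2' : (0:ℝ) ≤ p / 2 := by linarith
    have step2 := Real.rpow_le_rpow (by positivity) step1 hp2'
    have lhs_eq : ((‖a - b‖ : ℝ) ^ 2) ^ (p / 2) = ‖a - b‖ ^ p := by
      rw [← Real.rpow_natCast ‖a - b‖ 2, ← Real.rpow_mul (norm_nonneg _)]
      congr 1
      push_cast
      ring
    have rhs_eq : ((p - 1)⁻¹ * I * K ^ (2 - p)) ^ (p / 2) =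
        ((p - 1)⁻¹ * I) ^ (p / 2) * (K ^ p) ^ ((2 - p) / 2) := by
      rw [Real.mul_rpow (mul_nonneg hc0 hI0) (Real.rpow_nonneg hKpos.le _),
        ← Real.rpow_mul hKpos.le, ← Real.rpow_mul hKpos.le]
      ring_nf
    rw [lhs_eq, rhs_eq] at step2
    exact step2

lemma measurable_pFlux (d : ℕ) (p : ℝ) : Measurable (pFlux d p) :=
  (measurable_norm.pow measurable_const).smul measurable_id

theorem stmt_15.{u} (d : ℕ) (hd : 1 ≤ d) (p : ℝ) (hp1 : 1 < p) (hp2 : p ≤ 2) :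
    ∃ C > (0 : ℝ), ∀ (Ω : Type u) [MeasurableSpace Ω] (μ : Measure Ω)
      (f g : Ω → EuclideanSpace ℝ (Fin d)), Measurable f → Measurable g →
      vecLpNorm μ f p ≠ ⊤ → vecLpNorm μ g p ≠ ⊤ →
      vecLpNorm μ (fun ω => f ω - g ω) p ^ (2 : ℝ) ≤
        ENNReal.ofReal C * (vecLpNorm μ f p + vecLpNorm μ g p) ^ (2 - p) *
          ∫⁻ ω, ENNReal.ofReal ⟪pFlux d p (f ω) - pFlux d p (g ω), f ω - g ω⟫ ∂μ := by
  have hppos : (0:ℝ) < p := by linarith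
  refine ⟨(p - 1)⁻¹, inv_pos.2 (by linarith), ?_⟩
  intro Ω _ μ f g hf hg _ _
  set c : ℝ := (p - 1)⁻¹ with hcdef
  have hc0 : (0:ℝ) ≤ c := inv_nonneg.2 (by linarith)
  -- notation
  set Φ : Ω → ℝ≥0∞ := fun ω => ENNReal.ofReal ⟪pFlux d p (f ω) - pFlux d p (g ω), f ω - g ω⟫
    with hΦdef
  set Ψ : Ω → ℝ≥0∞ := fun ω => ENNReal.ofReal ((‖f ω‖ + ‖g ω‖) ^ p) with hΨdef
  set F : Ω → ℝ≥0∞ := fun ω => ENNReal.ofReal (‖f ω - g ω‖ ^ p) with hFdef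
  have hΦm : Measurable Φ :=
    ((((measurable_pFlux d p).comp hf).sub ((measurable_pFlux d p).comp hg)).inner
      (hf.sub hg)).ennreal_ofReal
  have hΨm : Measurable Ψ :=
    ((hf.norm.add hg.norm).pow measurable_const).ennreal_ofReal
  -- pointwise bound in ℝ≥0∞
  have h_pt : ∀ ω, F ω ≤ (ENNReal.ofReal c * Φ ω) ^ (p / 2) * Ψ ω ^ ((2 - p) / 2) := by
    intro ω
    have hIω : 0 ≤ ⟪pFlux d p (f ω) - pFlux d p (g ω), f ω - g ω⟫ :=
      inner_nonneg hp1 hp2 _ _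
    have h := ENNReal.ofReal_le_ofReal (pointwiseKey hp1 hp2 (f ω) (g ω))
    rw [ENNReal.ofReal_mul (Real.rpow_nonneg (mul_nonneg hc0 hIω) _),
      ← ENNReal.ofReal_rpow_of_nonneg (mul_nonneg hc0 hIω) (by linarith),
      ← ENNReal.ofReal_rpow_of_nonneg (Real.rpow_nonneg (by positivity) _) (by linarith),
      ENNReal.ofReal_mul hc0] at h
    exact h
  -- Hölder step
  have holder : ∫⁻ ω, F ω ∂μ ≤
      (∫⁻ ω, ENNReal.ofReal c * Φ ω ∂μ) ^ (p / 2) * (∫⁻ ω, Ψ ω ∂μ) ^ ((2 - p) / 2) := by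
    refine le_trans (lintegral_mono h_pt) ?_
    rcases eq_or_lt_of_le hp2 with hp2' | hp2'
    · -- p = 2 : the second factor is 1 pointwise and in the integral
      subst hp2'
      simp only [sub_self, zero_div, ENNReal.rpow_zero, mul_one]
      simp only [show (2:ℝ)/2 = 1 from by norm_num, ENNReal.rpow_one]
      exact le_refl _
    · have h2p : (2:ℝ) - p ≠ 0 := ne_of_gt (by linarith)
      have hpne : p ≠ 0 := ne_of_gt hppos
      have hpq : ((2:ℝ)/p).HolderConjugate (2/(2-p)) := by
        rw [Real.holderConjugate_iff]
        constructor
        · rw [lt_div_iff₀ hppos]; linarith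
        · rw [inv_div, inv_div]; field_simp; ring
      have := ENNReal.lintegral_mul_le_Lp_mul_Lq μ hpq
        (f := fun ω => (ENNReal.ofReal c * Φ ω) ^ (p / 2))
        (g := fun ω => Ψ ω ^ ((2 - p) / 2))
        (((hΦm.const_mul _).pow measurable_const).aemeasurable)
        ((hΨm.pow measurable_const).aemeasurable)
      simp only [Pi.mul_apply] at this
      refine le_trans this ?_
      have e1 : ∀ x : ℝ≥0∞, (x ^ (p/2)) ^ ((2:ℝ)/p) = x := by
        intro x
        rw [← ENNReal.rpow_mul]
        rw [show (p/2) * (2/p) = 1 from by field_simp, ENNReal.rpow_one]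
      have e2 : ∀ x : ℝ≥0∞, (x ^ ((2-p)/2)) ^ ((2:ℝ)/(2-p)) = x := by
        intro x
        rw [← ENNReal.rpow_mul]
        rw [show ((2-p)/2) * (2/(2-p)) = 1 from by
          field_simp, ENNReal.rpow_one]
      simp only [e1, e2]
      rw [show 1/((2:ℝ)/p) = p/2 from by field_simp, show 1/((2:ℝ)/(2-p)) = (2-p)/2 from by
        field_simp]
  -- pull out the constant
  have hμΦ : ∫⁻ ω, ENNReal.ofReal c * Φ ω ∂μ =
      ENNReal.ofReal c * ∫⁻ ω, Φ ω ∂μ := lintegral_const_mul _ hΦm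
  rw [hμΦ] at holder
  -- Minkowski
  have mink : (∫⁻ ω, Ψ ω ∂μ) ^ (1/p) ≤ vecLpNorm μ f p + vecLpNorm μ g p := by
    have hΨeq : ∀ ω, Ψ ω =
        (ENNReal.ofReal ‖f ω‖ + ENNReal.ofReal ‖g ω‖) ^ p := by
      intro ω
      rw [← ENNReal.ofReal_add (norm_nonneg _) (norm_nonneg _),
        ENNReal.ofReal_rpow_of_nonneg (by positivity) hppos.le]
    calc (∫⁻ ω, Ψ ω ∂μ) ^ (1/p)
        = (∫⁻ ω, ((fun ω => ENNReal.ofReal ‖f ω‖) + fun ω => ENNReal.ofReal ‖g ω‖) ω ^ p ∂μ)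
            ^ (1/p) := by
          simp only [Pi.add_apply]
          congr 1
          exact lintegral_congr hΨeq
      _ ≤ (∫⁻ ω, ENNReal.ofReal ‖f ω‖ ^ p ∂μ) ^ (1/p) +
            (∫⁻ ω, ENNReal.ofReal ‖g ω‖ ^ p ∂μ) ^ (1/p) :=
          ENNReal.lintegral_Lp_add_le hf.norm.ennreal_ofReal.aemeasurable
            hg.norm.ennreal_ofReal.aemeasurable hp1.le
      _ = vecLpNorm μ f p + vecLpNorm μ g p := by
          unfold vecLpNorm
          rw [lintegral_congr (fun ω =>
              (ENNReal.ofReal_rpow_of_nonneg (norm_nonneg (f ω)) hppos.le :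
                ENNReal.ofReal ‖f ω‖ ^ p = _)),
            lintegral_congr (fun ω =>
              (ENNReal.ofReal_rpow_of_nonneg (norm_nonneg (g ω)) hppos.le :
                ENNReal.ofReal ‖g ω‖ ^ p = _))]
  -- final chain
  have h2p0 : (0:ℝ) ≤ 2 - p := by linarith
  calc vecLpNorm μ (fun ω => f ω - g ω) p ^ (2:ℝ)
      = (∫⁻ ω, F ω ∂μ) ^ ((1/p) * 2) := by
        unfold vecLpNorm
        rw [ENNReal.rpow_mul]
    _ ≤ ((ENNReal.ofReal c * ∫⁻ ω, Φ ω ∂μ) ^ (p/2) * (∫⁻ ω, Ψ ω ∂μ) ^ ((2-p)/2))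
          ^ ((1/p) * 2) := ENNReal.rpow_le_rpow holder (by positivity)
    _ = (ENNReal.ofReal c * ∫⁻ ω, Φ ω ∂μ) * ((∫⁻ ω, Ψ ω ∂μ) ^ (1/p)) ^ (2 - p) := by
        rw [ENNReal.mul_rpow_of_nonneg _ _ (by positivity), ← ENNReal.rpow_mul,
          ← ENNReal.rpow_mul, ← ENNReal.rpow_mul,
          show (p/2) * ((1/p) * 2) = 1 from by field_simp,
          show ((2-p)/2) * ((1/p) * 2) = (1/p) * (2-p) from by
            field_simp, ENNReal.rpow_one]
    _ ≤ (ENNReal.ofReal c * ∫⁻ ω, Φ ω ∂μ) *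
          (vecLpNorm μ f p + vecLpNorm μ g p) ^ (2 - p) :=
        mul_le_mul_right (ENNReal.rpow_le_rpow mink h2p0) _
    _ = ENNReal.ofReal c * (vecLpNorm μ f p + vecLpNorm μ g p) ^ (2 - p) *
          ∫⁻ ω, Φ ω ∂μ := by ring
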